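/- Let A = !![a₁,a₂,a₃; b₁,b₂,b₃; c₁,c₂,c₃] be a real 3×3 matrix with det A ≠ 0. Let (xᵢ,yᵢ,pᵢ,qᵢ) ∈ ℝ⁴ for i = 1,2,3 with hᵢ := c₁xᵢ+c₂yᵢ+c₃ ≠ 0, and let (x̃ᵢ,ỹᵢ,p̃ᵢ,q̃ᵢ) be the prolonged transform: (x̃ᵢ,ỹᵢ) := ((a₁xᵢ+a₂yᵢ+a₃)/hᵢ, (b₁xᵢ+b₂yᵢ+b₃)/hᵢ) and (p̃ᵢ,q̃ᵢ) the first two components of hᵢ·ℓᵢA⁻¹, where ℓᵢ := (pᵢ, qᵢ, −pᵢxᵢ−qᵢyᵢ). Then the quantity τ := det(ℓ₁,ℓ₂,ℓ₃)·det(A₁,A₂,A₃) is an absolute invariant: τ̃, computed from the transformed data with ℓ̃ᵢ := (p̃ᵢ, q̃ᵢ, −p̃ᵢx̃ᵢ−q̃ᵢỹᵢ) and Ãᵢ := (x̃ᵢ,ỹᵢ,1)ᵀ, equals τ. -/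

import Mathlib

open Matrix

/-- The gradient line `ℓ = (p, q, -p*x - q*y)` of the data `(x, y, p, q)`. -/
noncomputable def gradLine (x y p q : ℝ) : Fin 3 → ℝ := ![p, q, -(p * x) - q * y]

/-- Determinant of the 3×3 matrix with rows `v₁, v₂, v₃`. -/
noncomputable def det3 (v₁ v₂ v₃ : Fin 3 → ℝ) : ℝ := Matrix.det (Matrix.of ![v₁, v₂, v₃])

lemma gradLine_transform (a1 a2 a3 b1 b2 b3 c1 c2 c3 x y p q xt yt pt qt : ℝ)
    (hD : Matrix.det !![a1, a2, a3; b1, b2, b3; c1, c2, c3] ≠ 0)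
    (hh : (c1 * x + c2 * y + c3) ≠ 0)
    (hxt : xt = (a1 * x + a2 * y + a3) / (c1 * x + c2 * y + c3))
    (hyt : yt = (b1 * x + b2 * y + b3) / (c1 * x + c2 * y + c3))
    (hpt : pt = ((c1 * x + c2 * y + c3) • Matrix.vecMul (gradLine x y p q) (!![a1, a2, a3; b1, b2, b3; c1, c2, c3])⁻¹) 0)
    (hqt : qt = ((c1 * x + c2 * y + c3) • Matrix.vecMul (gradLine x y p q) (!![a1, a2, a3; b1, b2, b3; c1, c2, c3])⁻¹) 1) :
    gradLine xt yt pt qt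
      = (c1 * x + c2 * y + c3) • Matrix.vecMul (gradLine x y p q) (!![a1, a2, a3; b1, b2, b3; c1, c2, c3])⁻¹ := by
  unfold gradLine at *
  set A := !![a1, a2, a3; b1, b2, b3; c1, c2, c3] with hA
  set h := c1 * x + c2 * y + c3 with hdef
  set m := Matrix.vecMul ![p, q, -(p * x) - q * y] A⁻¹ with hm
  have hmv : A *ᵥ ![x, y, 1] = h • ![xt, yt, 1] := by
    funext i; fin_cases i <;>
      simp [hA, Matrix.mulVec, dotProduct, Fin.sum_univ_three, hxt, hyt, hdef] <;>
      field_simp [show x * c1 + y * c2 + c3 ≠ 0 by intro e; exact hh (by rw [hdef]; linarith)]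
  have hdot : m ⬝ᵥ (A *ᵥ ![x, y, 1]) = 0 := by
    rw [Matrix.dotProduct_mulVec, hm, Matrix.vecMul_vecMul,
      Matrix.nonsing_inv_mul A (isUnit_iff_ne_zero.mpr hD), Matrix.vecMul_one]
    simp [dotProduct, Fin.sum_univ_three]
  rw [hmv] at hdot
  have hdot2 : m 0 * xt + m 1 * yt + m 2 = 0 := by
    have := hdot
    simp [dotProduct, Fin.sum_univ_three, hdef] at this
    have h2 : h * (m 0 * xt + m 1 * yt + m 2) = 0 := by rw [hdef]; linarith [this]
    rcases mul_eq_zero.mp h2 with h' | h'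
    · exact absurd h' hh
    · exact h'
  funext j; fin_cases j
  · simpa using hpt
  · simpa using hqt
  · show -(pt * xt) - qt * yt = (h • m) 2
    have h0 : pt = h * m 0 := by simpa using hpt
    have h1 : qt = h * m 1 := by simpa using hqt
    have : m 2 = -(m 0 * xt) - m 1 * yt := by linarith
    simp [h0, h1, this]; ring

theorem tau_is_absolute_invariant
    (a1 a2 a3 b1 b2 b3 c1 c2 c3 : ℝ)
    (hD : Matrix.det !![a1, a2, a3; b1, b2, b3; c1, c2, c3] ≠ 0)
    (x1 y1 p1 q1 x2 y2 p2 q2 x3 y3 p3 q3 : ℝ)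
    (hh1 : (c1 * x1 + c2 * y1 + c3) ≠ 0)
    (hh2 : (c1 * x2 + c2 * y2 + c3) ≠ 0)
    (hh3 : (c1 * x3 + c2 * y3 + c3) ≠ 0)
    (xt1 yt1 pt1 qt1 xt2 yt2 pt2 qt2 xt3 yt3 pt3 qt3 : ℝ)
    (hxt1 : xt1 = (a1 * x1 + a2 * y1 + a3) / (c1 * x1 + c2 * y1 + c3))
    (hyt1 : yt1 = (b1 * x1 + b2 * y1 + b3) / (c1 * x1 + c2 * y1 + c3))
    (hpt1 : pt1 = ((c1 * x1 + c2 * y1 + c3) • Matrix.vecMul (gradLine x1 y1 p1 q1) (!![a1, a2, a3; b1, b2, b3; c1, c2, c3])⁻¹) 0)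
    (hqt1 : qt1 = ((c1 * x1 + c2 * y1 + c3) • Matrix.vecMul (gradLine x1 y1 p1 q1) (!![a1, a2, a3; b1, b2, b3; c1, c2, c3])⁻¹) 1)
    (hxt2 : xt2 = (a1 * x2 + a2 * y2 + a3) / (c1 * x2 + c2 * y2 + c3))
    (hyt2 : yt2 = (b1 * x2 + b2 * y2 + b3) / (c1 * x2 + c2 * y2 + c3))
    (hpt2 : pt2 = ((c1 * x2 + c2 * y2 + c3) • Matrix.vecMul (gradLine x2 y2 p2 q2) (!![a1, a2, a3; b1, b2, b3; c1, c2, c3])⁻¹) 0)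
    (hqt2 : qt2 = ((c1 * x2 + c2 * y2 + c3) • Matrix.vecMul (gradLine x2 y2 p2 q2) (!![a1, a2, a3; b1, b2, b3; c1, c2, c3])⁻¹) 1)
    (hxt3 : xt3 = (a1 * x3 + a2 * y3 + a3) / (c1 * x3 + c2 * y3 + c3))
    (hyt3 : yt3 = (b1 * x3 + b2 * y3 + b3) / (c1 * x3 + c2 * y3 + c3))
    (hpt3 : pt3 = ((c1 * x3 + c2 * y3 + c3) • Matrix.vecMul (gradLine x3 y3 p3 q3) (!![a1, a2, a3; b1, b2, b3; c1, c2, c3])⁻¹) 0)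
    (hqt3 : qt3 = ((c1 * x3 + c2 * y3 + c3) • Matrix.vecMul (gradLine x3 y3 p3 q3) (!![a1, a2, a3; b1, b2, b3; c1, c2, c3])⁻¹) 1) :
    (det3 (gradLine xt1 yt1 pt1 qt1) (gradLine xt2 yt2 pt2 qt2) (gradLine xt3 yt3 pt3 qt3)) * Matrix.det !![xt1, xt2, xt3; yt1, yt2, yt3; 1, 1, 1]
      = (det3 (gradLine x1 y1 p1 q1) (gradLine x2 y2 p2 q2) (gradLine x3 y3 p3 q3)) * Matrix.det !![x1, x2, x3; y1, y2, y3; 1, 1, 1] := by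
  set A := !![a1, a2, a3; b1, b2, b3; c1, c2, c3] with hA
  set h1 := c1 * x1 + c2 * y1 + c3 with hh1def
  set h2 := c1 * x2 + c2 * y2 + c3 with hh2def
  set h3 := c1 * x3 + c2 * y3 + c3 with hh3def
  have key1 := gradLine_transform a1 a2 a3 b1 b2 b3 c1 c2 c3 x1 y1 p1 q1 xt1 yt1 pt1 qt1 hD hh1 hxt1 hyt1 hpt1 hqt1
  have key2 := gradLine_transform a1 a2 a3 b1 b2 b3 c1 c2 c3 x2 y2 p2 q2 xt2 yt2 pt2 qt2 hD hh2 hxt2 hyt2 hpt2 hqt2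
  have key3 := gradLine_transform a1 a2 a3 b1 b2 b3 c1 c2 c3 x3 y3 p3 q3 xt3 yt3 pt3 qt3 hD hh3 hxt3 hyt3 hpt3 hqt3
  have hL : Matrix.of ![gradLine xt1 yt1 pt1 qt1, gradLine xt2 yt2 pt2 qt2, gradLine xt3 yt3 pt3 qt3]
      = Matrix.diagonal ![h1, h2, h3] *
        (Matrix.of ![gradLine x1 y1 p1 q1, gradLine x2 y2 p2 q2, gradLine x3 y3 p3 q3] * A⁻¹) := by
    ext i j
    fin_cases i <;>
      simp [key1, key2, key3, Matrix.mul_apply, Matrix.vecMul, dotProduct,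
        Fin.sum_univ_three, Matrix.diagonal] <;> rfl
  have hP : A * !![x1, x2, x3; y1, y2, y3; 1, 1, 1]
      = !![xt1, xt2, xt3; yt1, yt2, yt3; 1, 1, 1] * Matrix.diagonal ![h1, h2, h3] := by
    ext i j
    fin_cases i <;> fin_cases j <;>
      simp [hA, Matrix.mul_apply, Fin.sum_univ_three, Matrix.diagonal, hxt1, hyt1, hxt2,
        hyt2, hxt3, hyt3] <;>
      field_simp <;> rfl
  have d1 : det3 (gradLine xt1 yt1 pt1 qt1) (gradLine xt2 yt2 pt2 qt2) (gradLine xt3 yt3 pt3 qt3)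
      = (h1 * h2 * h3) * (det3 (gradLine x1 y1 p1 q1) (gradLine x2 y2 p2 q2) (gradLine x3 y3 p3 q3) * (Matrix.det A)⁻¹) := by
    rw [det3, hL, Matrix.det_mul, Matrix.det_mul, Matrix.det_diagonal, Fin.prod_univ_three,
      Matrix.det_nonsing_inv, Ring.inverse_eq_inv']
    simp [det3]
  have d2 : Matrix.det A * Matrix.det !![x1, x2, x3; y1, y2, y3; 1, 1, 1]
      = Matrix.det !![xt1, xt2, xt3; yt1, yt2, yt3; 1, 1, 1] * (h1 * h2 * h3) := by
    rw [← Matrix.det_mul, hP, Matrix.det_mul, Matrix.det_diagonal, Fin.prod_univ_three]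
    simp
  rw [d1]
  have hPt : Matrix.det !![xt1, xt2, xt3; yt1, yt2, yt3; 1, 1, 1]
      = Matrix.det A * Matrix.det !![x1, x2, x3; y1, y2, y3; 1, 1, 1] / (h1 * h2 * h3) := by
    rw [eq_div_iff (mul_ne_zero (mul_ne_zero hh1 hh2) hh3)]
    linarith [d2]
  rw [hPt]
  field_simp
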